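/- Fix vectors p₁,…,p₅, u₁,…,u₅ ∈ ℝ³, and let Sol denote the set of all solutions of the IOD system for the data (pᵢ, uᵢ). If Sol is finite, then its cardinality is divisible by 8. -/

import Mathlib

/-- The cross product on `EuclideanSpace ℝ (Fin 3)`. -/
noncomputable def cross3 (x y : EuclideanSpace ℝ (Fin 3)) : EuclideanSpace ℝ (Fin 3) :=
  (EuclideanSpace.equiv (Fin 3) ℝ).symm
    ![x 1 * y 2 - x 2 * y 1, x 2 * y 0 - x 0 * y 2, x 0 * y 1 - x 1 * y 0]

/-- The 15-equation polynomial system for angles-only initial orbit determination: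
with `v₂ = λ₂ (w × u₁)`, `v₁ = λ₁ (v₂ × w)`, `rᵢ = pᵢ + ρᵢ uᵢ`, `xᵢ = ⟨rᵢ, v₁⟩`,
`yᵢ = ⟨rᵢ, v₂⟩`, the constraints are: `w`, `v₁`, `v₂` are unit vectors, each `rᵢ`
lies in the orbital plane, the five planar points lie on the normalized conic with
coefficients `(a,b,c,d,e)`, and the two focal polynomials vanish. -/
noncomputable def IsIODSolution (p u : Fin 5 → EuclideanSpace ℝ (Fin 3))
    (w : EuclideanSpace ℝ (Fin 3)) (l₁ l₂ : ℝ) (ρ : Fin 5 → ℝ)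
    (a b c d e : ℝ) : Prop :=
  let v₂ : EuclideanSpace ℝ (Fin 3) := l₂ • cross3 w (u 0)
  let v₁ : EuclideanSpace ℝ (Fin 3) := l₁ • cross3 v₂ w
  let r : Fin 5 → EuclideanSpace ℝ (Fin 3) := fun i => p i + ρ i • u i
  let x : Fin 5 → ℝ := fun i => (inner ℝ (r i) v₁ : ℝ)
  let y : Fin 5 → ℝ := fun i => (inner ℝ (r i) v₂ : ℝ)
  (inner ℝ w w : ℝ) = 1 ∧ (inner ℝ v₁ v₁ : ℝ) = 1 ∧ (inner ℝ v₂ v₂ : ℝ) = 1 ∧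
  (∀ i, (inner ℝ (r i) w : ℝ) = 0) ∧
  (∀ i, a * x i ^ 2 + b * y i ^ 2 + c * x i * y i + d * x i + e * y i + 1 = 0) ∧
  e ^ 2 - 4 * b - d ^ 2 + 4 * a = 0 ∧
  d * e - 2 * c = 0

lemma cross3_neg_left (x y : EuclideanSpace ℝ (Fin 3)) : cross3 (-x) y = -cross3 x y := by
  ext i; fin_cases i <;> simp [cross3] <;> ring

lemma cross3_neg_right (x y : EuclideanSpace ℝ (Fin 3)) : cross3 x (-y) = -cross3 x y := by
  ext i; fin_cases i <;> simp [cross3] <;> ring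

lemma cross3_neg_neg (x y : EuclideanSpace ℝ (Fin 3)) : cross3 (-x) (-y) = cross3 x y := by
  rw [cross3_neg_left, cross3_neg_right, neg_neg]

/-- Generic halving lemma: a fixed-point-free involution splitting a finite set into a
"positive" part and its image doubles the count. -/
lemma halving_ncard {α : Type*} (s : Set α) (hs : s.Finite) (σ : α → α)
    (hmap : ∀ x ∈ s, σ x ∈ s) (hinv : ∀ x ∈ s, σ (σ x) = x)
    (q : α → Prop) (hq : ∀ x ∈ s, (q x ↔ ¬ q (σ x))) :
    s.ncard = 2 * (s ∩ {x | q x}).ncard := by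
  classical
  set t := s ∩ {x | q x} with ht
  set t' := s ∩ {x | ¬ q x} with ht'
  have hunion : s = t ∪ t' := by
    ext x; by_cases hx : q x <;> simp [ht, ht', hx]
  have hdisj : Disjoint t t' := by
    rw [Set.disjoint_left]; rintro x ⟨-, hx⟩ ⟨-, hx'⟩; exact hx' hx
  have himg : t' = σ '' t := by
    ext y
    constructor
    · rintro ⟨hys, hyq⟩
      refine ⟨σ y, ⟨hmap y hys, ?_⟩, hinv y hys⟩
      have := hq (σ y) (hmap y hys)
      rw [hinv y hys] at this
      exact this.mpr hyq
    · rintro ⟨x, ⟨hxs, hxq⟩, rfl⟩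
      exact ⟨hmap x hxs, (hq x hxs).mp hxq⟩
  have hinj : Set.InjOn σ t := by
    intro x hx y hy hxy
    have := congrArg σ hxy
    rwa [hinv x hx.1, hinv y hy.1] at this
  have hcard : t'.ncard = t.ncard := by
    rw [himg, Set.ncard_image_of_injOn hinj]
  rw [hunion, Set.ncard_union_eq hdisj (hs.subset Set.inter_subset_left)
    (hs.subset Set.inter_subset_left), hcard]
  ring

/-- σ₃ : negate `l₂`, `d`, `e`. -/
lemma IsIODSolution.neg3 {p u w l₁ l₂ ρ a b c d e}
    (h : IsIODSolution p u w l₁ l₂ ρ a b c d e) :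
    IsIODSolution p u w l₁ (-l₂) ρ a b c (-d) (-e) := by
  simp only [IsIODSolution] at h ⊢
  obtain ⟨h1, h2, h3, h4, h5, h6, h7⟩ := h
  rw [neg_smul, cross3_neg_left]
  refine ⟨h1, ?_, ?_, h4, ?_, by ring_nf; linarith, by ring_nf; linarith⟩
  · rw [smul_neg, inner_neg_neg]; exact h2
  · rw [inner_neg_neg]; exact h3
  · intro i
    rw [smul_neg, inner_neg_right, inner_neg_right]
    have := h5 i
    ring_nf at this ⊢
    linarith

/-- σ₂ : negate `l₁`, `c`, `d`. -/
lemma IsIODSolution.neg2 {p u w l₁ l₂ ρ a b c d e}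
    (h : IsIODSolution p u w l₁ l₂ ρ a b c d e) :
    IsIODSolution p u w (-l₁) l₂ ρ a b (-c) (-d) e := by
  simp only [IsIODSolution] at h ⊢
  obtain ⟨h1, h2, h3, h4, h5, h6, h7⟩ := h
  rw [neg_smul]
  refine ⟨h1, ?_, h3, h4, ?_, by ring_nf; linarith, by ring_nf; linarith⟩
  · rw [inner_neg_neg]; exact h2
  · intro i
    rw [inner_neg_right]
    have := h5 i
    ring_nf at this ⊢
    linarith

/-- σ₁ : negate `w`, `c`, `e`. -/
lemma IsIODSolution.neg1 {p u w l₁ l₂ ρ a b c d e}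
    (h : IsIODSolution p u w l₁ l₂ ρ a b c d e) :
    IsIODSolution p u (-w) l₁ l₂ ρ a b (-c) d (-e) := by
  simp only [IsIODSolution] at h ⊢
  obtain ⟨h1, h2, h3, h4, h5, h6, h7⟩ := h
  rw [cross3_neg_left, smul_neg, cross3_neg_neg]
  refine ⟨by rw [inner_neg_neg]; exact h1, h2, by rw [inner_neg_neg]; exact h3, ?_,
    ?_, by ring_nf; linarith, by ring_nf; linarith⟩
  · intro i; rw [inner_neg_right, h4 i, neg_zero]
  · intro i
    rw [inner_neg_right]
    have := h5 i
    ring_nf at this ⊢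
    linarith

/-- The positivity normalization on nonzero vectors of `ℝ³`. -/
def Pw (w : EuclideanSpace ℝ (Fin 3)) : Prop :=
  0 < w 0 ∨ (w 0 = 0 ∧ (0 < w 1 ∨ (w 1 = 0 ∧ 0 < w 2)))

lemma Pw_neg_iff {w : EuclideanSpace ℝ (Fin 3)}
    (hw : ¬ (w 0 = 0 ∧ w 1 = 0 ∧ w 2 = 0)) : Pw w ↔ ¬ Pw (-w) := by
  have e0 : (-w) 0 = -(w 0) := rfl
  have e1 : (-w) 1 = -(w 1) := rfl
  have e2 : (-w) 2 = -(w 2) := rfl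
  simp only [Pw, e0, e1, e2]
  constructor
  · rintro (h | ⟨he, h | ⟨he', h⟩⟩) (h' | ⟨he2, h' | ⟨he2', h'⟩⟩) <;> linarith
  · intro hn
    rcases lt_trichotomy (w 0) 0 with h0 | h0 | h0
    · exact absurd (Or.inl (by linarith : (0:ℝ) < -w 0)) hn
    · rcases lt_trichotomy (w 1) 0 with h1 | h1 | h1
      · exact absurd (Or.inr ⟨by linarith, Or.inl (by linarith)⟩) hn
      · rcases lt_trichotomy (w 2) 0 with h2 | h2 | h2
        · exact absurd (Or.inr ⟨by linarith, Or.inr ⟨by linarith, by linarith⟩⟩) hn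
        · exact absurd ⟨h0, h1, h2⟩ hw
        · exact Or.inr ⟨h0, Or.inr ⟨h1, h2⟩⟩
      · exact Or.inr ⟨h0, Or.inl h1⟩
    · exact Or.inl h0

/-- The three nonvanishing facts needed for freeness of the action. -/
lemma IsIODSolution.nonzero {p u w l₁ l₂ ρ a b c d e}
    (h : IsIODSolution p u w l₁ l₂ ρ a b c d e) :
    l₁ ≠ 0 ∧ l₂ ≠ 0 ∧ ¬ (w 0 = 0 ∧ w 1 = 0 ∧ w 2 = 0) := by
  simp only [IsIODSolution] at h
  obtain ⟨h1, h2, h3, -⟩ := h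
  refine ⟨?_, ?_, ?_⟩
  · rintro rfl
    rw [zero_smul, inner_zero_left] at h2
    exact one_ne_zero h2.symm
  · rintro rfl
    rw [zero_smul, inner_zero_left] at h3
    exact one_ne_zero h3.symm
  · rintro ⟨e0, e1, e2⟩
    have hw0 : w = 0 := by
      ext i
      fin_cases i <;> simp [e0, e1, e2]
    rw [hw0, inner_zero_left] at h1
    exact one_ne_zero h1.symm

/-- If the set of solutions of the IOD system is finite, its cardinality is
divisible by 8. -/
theorem iod_solution_count_div_eight (p u : Fin 5 → EuclideanSpace ℝ (Fin 3))
    (Sol : Set (EuclideanSpace ℝ (Fin 3) × ℝ × ℝ × (Fin 5 → ℝ) × ℝ × ℝ × ℝ × ℝ × ℝ))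
    (hSol : Sol = {T | IsIODSolution p u T.1 T.2.1 T.2.2.1 T.2.2.2.1
      T.2.2.2.2.1 T.2.2.2.2.2.1 T.2.2.2.2.2.2.1 T.2.2.2.2.2.2.2.1 T.2.2.2.2.2.2.2.2})
    (hfin : Sol.Finite) :
    8 ∣ Sol.ncard := by
  classical
  subst hSol
  set α := EuclideanSpace ℝ (Fin 3) × ℝ × ℝ × (Fin 5 → ℝ) × ℝ × ℝ × ℝ × ℝ × ℝ
  set Sol : Set α := {T | IsIODSolution p u T.1 T.2.1 T.2.2.1 T.2.2.2.1
      T.2.2.2.2.1 T.2.2.2.2.2.1 T.2.2.2.2.2.2.1 T.2.2.2.2.2.2.2.1 T.2.2.2.2.2.2.2.2}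
    with hS
  -- the three sign maps
  let σ₃ : α → α := fun T =>
    (T.1, T.2.1, -T.2.2.1, T.2.2.2.1, T.2.2.2.2.1, T.2.2.2.2.2.1,
      T.2.2.2.2.2.2.1, -T.2.2.2.2.2.2.2.1, -T.2.2.2.2.2.2.2.2)
  let σ₂ : α → α := fun T =>
    (T.1, -T.2.1, T.2.2.1, T.2.2.2.1, T.2.2.2.2.1, T.2.2.2.2.2.1,
      -T.2.2.2.2.2.2.1, -T.2.2.2.2.2.2.2.1, T.2.2.2.2.2.2.2.2)
  let σ₁ : α → α := fun T =>
    (-T.1, T.2.1, T.2.2.1, T.2.2.2.1, T.2.2.2.2.1, T.2.2.2.2.2.1,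
      -T.2.2.2.2.2.2.1, T.2.2.2.2.2.2.2.1, -T.2.2.2.2.2.2.2.2)
  have hmem3 : ∀ T ∈ Sol, σ₃ T ∈ Sol := fun T hT => hT.neg3
  have hmem2 : ∀ T ∈ Sol, σ₂ T ∈ Sol := fun T hT => hT.neg2
  have hmem1 : ∀ T ∈ Sol, σ₁ T ∈ Sol := fun T hT => hT.neg1
  have hinv3 : ∀ T : α, σ₃ (σ₃ T) = T := by intro T; simp [σ₃]
  have hinv2 : ∀ T : α, σ₂ (σ₂ T) = T := by intro T; simp [σ₂]
  have hinv1 : ∀ T : α, σ₁ (σ₁ T) = T := by intro T; simp [σ₁]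
  -- step 1: l₂ > 0
  set S1 : Set α := Sol ∩ {T | 0 < T.2.2.1} with hS1
  have hfin1 : S1.Finite := hfin.subset Set.inter_subset_left
  have step1 : Sol.ncard = 2 * S1.ncard := by
    refine halving_ncard Sol hfin σ₃ hmem3 (fun T _ => hinv3 T) (fun T => 0 < T.2.2.1) ?_
    intro T hT
    have hl₂ : T.2.2.1 ≠ 0 := hT.nonzero.2.1
    show 0 < T.2.2.1 ↔ ¬ 0 < -T.2.2.1
    constructor <;> intro h
    · simp only [not_lt]; linarith
    · rcases hl₂.lt_or_gt with h' | h'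
      · exact absurd (by linarith : (0:ℝ) < -T.2.2.1) h
      · exact h'
  -- step 2: l₁ > 0
  set S2 : Set α := S1 ∩ {T | 0 < T.2.1} with hS2
  have hfin2 : S2.Finite := hfin1.subset Set.inter_subset_left
  have step2 : S1.ncard = 2 * S2.ncard := by
    refine halving_ncard S1 hfin1 σ₂ ?_ (fun T _ => hinv2 T) (fun T => 0 < T.2.1) ?_
    · rintro T ⟨hT, hTl⟩
      exact ⟨hmem2 T hT, hTl⟩
    · rintro T ⟨hT, -⟩
      have hl₁ : T.2.1 ≠ 0 := hT.nonzero.1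
      show 0 < T.2.1 ↔ ¬ 0 < -T.2.1
      constructor <;> intro h
      · simp only [not_lt]; linarith
      · rcases hl₁.lt_or_gt with h' | h'
        · exact absurd (by linarith : (0:ℝ) < -T.2.1) h
        · exact h'
  -- step 3: Pw w
  set S3 : Set α := S2 ∩ {T | Pw T.1} with hS3
  have step3 : S2.ncard = 2 * S3.ncard := by
    refine halving_ncard S2 hfin2 σ₁ ?_ (fun T _ => hinv1 T) (fun T => Pw T.1) ?_
    · rintro T ⟨⟨hT, hTl₂⟩, hTl₁⟩
      exact ⟨⟨hmem1 T hT, hTl₂⟩, hTl₁⟩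
    · rintro T ⟨⟨hT, -⟩, -⟩
      exact Pw_neg_iff hT.nonzero.2.2
  refine ⟨S3.ncard, ?_⟩
  rw [step1, step2, step3]
  ring
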